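/- If Q is a reversible generator matrix (with reversible distribution π having all positive entries) and P = e^Q, then P is reversible with respect to π and all eigenvalues of P are positive real numbers. -/

import Mathlib

open Matrix

/-- `Q` is a generator matrix: nonnegative off-diagonal entries, rows sum to 0. -/
def IsGenerator {n : ℕ} (Q : Matrix (Fin n) (Fin n) ℝ) : Prop :=
  (∀ i j, i ≠ j → 0 ≤ Q i j) ∧ ∀ i, ∑ j, Q i j = 0

theorem exp_of_reversible_generator {n : ℕ}
    (Q P : Matrix (Fin n) (Fin n) ℝ) (π : Fin n → ℝ)
    (hQ : IsGenerator Q)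
    (hπpos : ∀ i, 0 < π i) (hπsum : ∑ i, π i = 1)
    (hrev : ∀ i j, π i * Q i j = π j * Q j i)
    (hPQ : P = NormedSpace.exp Q) :
    (∀ i j, π i * P i j = π j * P j i) ∧
    (∀ z ∈ spectrum ℂ (P.map Complex.ofReal), z.im = 0 ∧ 0 < z.re) := by
  have hπne : ∀ i, π i ≠ 0 := fun i => (hπpos i).ne'
  -- Part 1: reversibility of P
  have hMuval : diagonal π * diagonal (fun i => (π i)⁻¹) = 1 := by
    rw [diagonal_mul_diagonal]
    convert diagonal_one with i
    exact mul_inv_cancel₀ (hπne i)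
  have hMuval' : diagonal (fun i => (π i)⁻¹) * diagonal π = 1 := by
    rw [diagonal_mul_diagonal]
    convert diagonal_one with i
    exact inv_mul_cancel₀ (hπne i)
  set Mu : (Matrix (Fin n) (Fin n) ℝ)ˣ :=
    ⟨diagonal π, diagonal (fun i => (π i)⁻¹), hMuval, hMuval'⟩ with hMu
  have hMQ : diagonal π * Q = Qᵀ * diagonal π := by
    ext i j
    rw [diagonal_mul, mul_diagonal, transpose_apply, hrev i j]
    ring
  have hQT : Qᵀ = Mu.val * Q * (Mu⁻¹).val := by
    rw [Units.eq_mul_inv_iff_mul_eq]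
    exact hMQ.symm
  have hPart1 : diagonal π * P = Pᵀ * diagonal π := by
    have h1 : NormedSpace.exp Qᵀ = Mu.val * NormedSpace.exp Q * (Mu⁻¹).val := by
      rw [hQT, Matrix.exp_units_conj]
    rw [Matrix.exp_transpose, ← hPQ] at h1
    have h2 : Pᵀ * Mu.val = (Mu.val * P * (Mu⁻¹).val) * Mu.val := by rw [← h1]
    have h3 : (Mu.val * P * (Mu⁻¹).val : Matrix (Fin n) (Fin n) ℝ) * Mu.val = Mu.val * P := by
      rw [mul_assoc, Mu.inv_mul, mul_one]
    rw [h3] at h2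
    exact h2.symm
  refine ⟨fun i j => ?_, ?_⟩
  · have := congrFun (congrFun hPart1 i) j
    rwa [diagonal_mul, mul_diagonal, transpose_apply, mul_comm (P j i)] at this
  -- Part 2: spectrum
  set s : Fin n → ℝ := fun i => Real.sqrt (π i) with hs
  have hspos : ∀ i, 0 < s i := fun i => Real.sqrt_pos.2 (hπpos i)
  have hsne : ∀ i, s i ≠ 0 := fun i => (hspos i).ne'
  have hss : ∀ i, s i * s i = π i := fun i => Real.mul_self_sqrt (hπpos i).le
  have hdval : diagonal s * diagonal (fun i => (s i)⁻¹) = 1 := by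
    rw [diagonal_mul_diagonal]
    convert diagonal_one with i
    exact mul_inv_cancel₀ (hsne i)
  have hdval' : diagonal (fun i => (s i)⁻¹) * diagonal s = 1 := by
    rw [diagonal_mul_diagonal]
    convert diagonal_one with i
    exact inv_mul_cancel₀ (hsne i)
  set du : (Matrix (Fin n) (Fin n) ℝ)ˣ :=
    ⟨diagonal s, diagonal (fun i => (s i)⁻¹), hdval, hdval'⟩ with hdu
  set S : Matrix (Fin n) (Fin n) ℝ := du.val * Q * (du⁻¹).val with hS
  have hSsymm : S.IsSymm := by
    refine IsSymm.ext fun i j => ?_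
    show (diagonal s * Q * diagonal (fun k => (s k)⁻¹)) j i
      = (diagonal s * Q * diagonal (fun k => (s k)⁻¹)) i j
    rw [mul_diagonal, mul_diagonal, diagonal_mul, diagonal_mul]
    have key : π j * Q j i = π i * Q i j := hrev j i
    rw [← hss i, ← hss j] at key
    field_simp [hsne i, hsne j]
    linear_combination key
  have hEexp : NormedSpace.exp S = du.val * P * (du⁻¹).val := by
    rw [hS, Matrix.exp_units_conj, hPQ]
  set E : Matrix (Fin n) (Fin n) ℝ := NormedSpace.exp S with hE
  have hP_eq : P = (du⁻¹).val * E * du.val := by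
    rw [hEexp]
    simp only [← mul_assoc]
    rw [Units.inv_mul, one_mul, mul_assoc, Units.inv_mul, mul_one]
  -- map to ℂ
  set φ : Matrix (Fin n) (Fin n) ℝ →+* Matrix (Fin n) (Fin n) ℂ :=
    (Complex.ofRealHom.mapMatrix) with hφ
  have hφ_apply : ∀ (A : Matrix (Fin n) (Fin n) ℝ), φ A = A.map Complex.ofReal := fun A => rfl
  set H : Matrix (Fin n) (Fin n) ℂ := φ E with hH
  have hHerm : H.IsHermitian := by
    refine Matrix.IsHermitian.ext fun i j => ?_
    show star ((E.map Complex.ofReal) j i) = (E.map Complex.ofReal) i j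
    simp only [Matrix.map_apply, Complex.star_def, Complex.conj_ofReal, Complex.ofReal_inj]
    exact (hSsymm.exp).apply i j
  -- E = exp(S/2) * exp(S/2)
  set B : Matrix (Fin n) (Fin n) ℂ := φ (NormedSpace.exp ((2⁻¹ : ℝ) • S)) with hB
  have hBH : Bᴴ = B := by
    refine Matrix.ext fun i j => ?_
    show star (((NormedSpace.exp ((2⁻¹:ℝ) • S)).map Complex.ofReal) j i)
      = ((NormedSpace.exp ((2⁻¹:ℝ) • S)).map Complex.ofReal) i j
    simp only [Matrix.map_apply, Complex.star_def, Complex.conj_ofReal, Complex.ofReal_inj]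
    exact ((hSsymm.smul (2⁻¹ : ℝ)).exp).apply i j
  have hHBB : H = Bᴴ * B := by
    rw [hBH, hB, ← _root_.map_mul, ← Matrix.exp_add_of_commute ((2⁻¹:ℝ) • S) ((2⁻¹:ℝ) • S) (Commute.refl _)]
    rw [← add_smul]
    norm_num
    rfl
  have hBunit : IsUnit B := (Matrix.isUnit_exp _).map φ
  have hHunit : IsUnit H := by rw [hHBB, hBH]; exact hBunit.mul hBunit
  open ComplexOrder in
  have hPos : H.PosDef := by
    refine Matrix.posDef_iff_dotProduct_mulVec.2 ⟨hHerm, fun x hx => ?_⟩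
    have hle : 0 ≤ star x ⬝ᵥ H *ᵥ x := by
      rw [hHBB]
      exact (Matrix.posSemidef_iff_dotProduct_mulVec.1 (Matrix.posSemidef_conjTranspose_mul_self B)).2 x
    rcases eq_or_lt_of_le hle with heq | hlt
    · exfalso
      have h0 : H *ᵥ x = 0 := by
        rw [hHBB] at heq ⊢
        exact (Matrix.posSemidef_conjTranspose_mul_self B).dotProduct_mulVec_zero_iff x |>.1 heq.symm
      have : x = 0 := by
        have h1 : H⁻¹ * H = 1 :=
          Matrix.nonsing_inv_mul H (Matrix.isUnit_iff_isUnit_det H |>.1 hHunit)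
        calc x = 1 *ᵥ x := (Matrix.one_mulVec x).symm
          _ = (H⁻¹ * H) *ᵥ x := by rw [h1]
          _ = H⁻¹ *ᵥ (H *ᵥ x) := by rw [← Matrix.mulVec_mulVec]
          _ = 0 := by rw [h0, Matrix.mulVec_zero]
      exact hx this
    · exact hlt
  -- spectrum of P.map equals spectrum of H
  have hspec : spectrum ℂ (P.map Complex.ofReal) = spectrum ℂ H := by
    have hPmap : P.map Complex.ofReal = φ (du⁻¹).val * H * φ du.val := by
      rw [← hφ_apply, hP_eq, _root_.map_mul, _root_.map_mul, hH]
    set v : (Matrix (Fin n) (Fin n) ℂ)ˣ :=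
      ⟨φ (du⁻¹).val, φ du.val, by rw [← _root_.map_mul, Units.inv_mul, _root_.map_one], by
        rw [← _root_.map_mul, Units.mul_inv, _root_.map_one]⟩ with hv
    calc spectrum ℂ (P.map Complex.ofReal) = spectrum ℂ (↑v * H * ↑v⁻¹) := by
          rw [hPmap]; rfl
      _ = spectrum ℂ H := spectrum.units_conjugate
  have hspecH : spectrum ℂ H = Set.range (fun i => (hHerm.eigenvalues i : ℂ)) := by
    conv_lhs => rw [hHerm.spectral_theorem, Unitary.conjStarAlgAut_apply]
    rw [Unitary.spectrum_star_right_conjugate, spectrum_diagonal]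
    ext z
    constructor
    · rintro ⟨i, rfl⟩; exact ⟨i, rfl⟩
    · rintro ⟨i, rfl⟩; exact ⟨i, rfl⟩
  intro z hz
  rw [hspec, hspecH] at hz
  obtain ⟨i, rfl⟩ := hz
  have := hPos.eigenvalues_pos i
  exact ⟨Complex.ofReal_im _, by simpa using this⟩
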